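/- arXiv:math/0607238 — 6 statements merged into one kernel-verified Lean document; each statement's English description precedes it below -/
import Mathlib

section
/- For any n complex numbers z_1,...,z_n each with |z_k| ≥ 1, the maximum of |∑_{k=1}^n z_k^ν| over ν = 1,...,n is at least 1. -/
open Finset MvPolynomial

private lemma turan_filter_eq (k : ℕ) :
    {a ∈ Finset.HasAntidiagonal.antidiagonal k | a.1 < k} =
      (Finset.range k).image (fun i => (i, k - i)) := by
  ext ⟨a, b⟩
  simp only [Finset.mem_filter, Finset.HasAntidiagonal.mem_antidiagonal, Finset.mem_image,
    Finset.mem_range, Prod.mk.injEq]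
  constructor
  · rintro ⟨hab, ha⟩; exact ⟨a, ha, rfl, by omega⟩
  · rintro ⟨i, hi, rfl, rfl⟩; omega

theorem turan_first_main (n : ℕ) (hn : 1 ≤ n) (z : Fin n → ℂ)
    (hz : ∀ k, 1 ≤ ‖z k‖) :
    ∃ ν ∈ Finset.Icc 1 n, 1 ≤ ‖∑ k, z k ^ ν‖ := by
  by_contra hcon
  push_neg at hcon
  classical
  set E : ℕ → ℂ := fun k => MvPolynomial.eval z (MvPolynomial.esymm (Fin n) ℂ k) with hE
  have hE0 : E 0 = 1 := by simp [hE, MvPolynomial.esymm_zero]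
  have hSlt : ∀ m, 1 ≤ m → m ≤ n → ‖∑ i, z i ^ m‖ < 1 := fun m h1 h2 =>
    hcon m (Finset.mem_Icc.mpr ⟨h1, h2⟩)
  -- Newton's identities, evaluated at z
  have newton : ∀ k : ℕ, (k : ℂ) * E k =
      (-1) ^ (k + 1) * ∑ i ∈ Finset.range k, (-1) ^ i * E i * (∑ j, z j ^ (k - i)) := by
    intro k
    have h := congrArg (MvPolynomial.eval z) (MvPolynomial.mul_esymm_eq_sum (Fin n) ℂ k)
    rw [turan_filter_eq k] at h
    rw [Finset.sum_image (by intro a _ b _ hab; exact (Prod.mk.injEq _ _ _ _ ▸ hab).1)] at h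
    simpa [MvPolynomial.psum, hE] using h
  -- key inequality
  have key : ∀ k : ℕ, 1 ≤ k → k ≤ n →
      (k : ℝ) * ‖E k‖ < ∑ i ∈ Finset.range k, ‖E i‖ := by
    intro k h1 h2
    have h3 : (k : ℝ) * ‖E k‖ = ‖(k : ℂ) * E k‖ := by
      rw [norm_mul]; simp
    rw [h3, newton k, norm_mul, norm_pow, norm_neg, norm_one, one_pow, one_mul]
    calc ‖∑ i ∈ Finset.range k, (-1 : ℂ) ^ i * E i * (∑ j, z j ^ (k - i))‖
        ≤ ∑ i ∈ Finset.range k, ‖(-1 : ℂ) ^ i * E i * (∑ j, z j ^ (k - i))‖ :=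
          norm_sum_le _ _
      _ = ∑ i ∈ Finset.range k, ‖E i‖ * ‖∑ j, z j ^ (k - i)‖ := by
          apply Finset.sum_congr rfl; intro i _
          rw [norm_mul, norm_mul, norm_pow, norm_neg, norm_one, one_pow, one_mul]
      _ < ∑ i ∈ Finset.range k, ‖E i‖ := by
          apply Finset.sum_lt_sum
          · intro i hi
            have hi' := Finset.mem_range.mp hi
            have h4 : ‖∑ j, z j ^ (k - i)‖ < 1 := hSlt _ (by omega) (by omega)
            calc ‖E i‖ * ‖∑ j, z j ^ (k - i)‖ ≤ ‖E i‖ * 1 :=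
                  mul_le_mul_of_nonneg_left h4.le (norm_nonneg _)
              _ = ‖E i‖ := mul_one _
          · refine ⟨0, Finset.mem_range.mpr (by omega), ?_⟩
            have h4 : ‖∑ j, z j ^ (k - 0)‖ < 1 := hSlt _ (by omega) (by omega)
            rw [hE0]; simpa using h4
  -- cumulative bound
  have B : ∀ k, k ≤ n → ∑ i ∈ Finset.range (k + 1), ‖E i‖ ≤ (k : ℝ) + 1 := by
    intro k
    induction k with
    | zero => intro _; simp [hE0]
    | succ m ih =>
        intro hm
        have ihm := ih (by omega)
        have hkey := key (m + 1) (by omega) hm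
        rw [Finset.sum_range_succ]
        have hm1 : (0 : ℝ) < (m : ℝ) + 1 := by positivity
        have hEm : ‖E (m + 1)‖ < (∑ i ∈ Finset.range (m + 1), ‖E i‖) / ((m : ℝ) + 1) := by
          rw [lt_div_iff₀ hm1]
          calc ‖E (m + 1)‖ * ((m : ℝ) + 1) = ((m + 1 : ℕ) : ℝ) * ‖E (m + 1)‖ := by
                push_cast; ring
            _ < _ := hkey
        have hdiv : (∑ i ∈ Finset.range (m + 1), ‖E i‖) / ((m : ℝ) + 1) ≤ 1 := by
          rw [div_le_one hm1]; linarith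
        push_cast
        linarith
  -- conclusion: ‖E n‖ < 1
  have hEn_lt : ‖E n‖ < 1 := by
    have hkey := key n hn le_rfl
    have hB := B (n - 1) (by omega)
    have hn' : n - 1 + 1 = n := by omega
    rw [hn'] at hB
    have hcast : ((n - 1 : ℕ) : ℝ) + 1 = (n : ℝ) := by
      have : (1:ℕ) ≤ n := hn
      push_cast [this]; ring
    rw [hcast] at hB
    have hnpos : (0 : ℝ) < n := by positivity
    nlinarith
  -- but E n = ∏ z i has norm ≥ 1
  have hEn : E n = ∏ i, z i := by
    have h1 : MvPolynomial.esymm (Fin n) ℂ n = ∏ i, MvPolynomial.X i := by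
      rw [MvPolynomial.esymm]
      have h2 : Finset.powersetCard n (Finset.univ : Finset (Fin n)) = {Finset.univ} := by
        simpa using Finset.powersetCard_self (Finset.univ : Finset (Fin n))
      rw [h2, Finset.sum_singleton]
    simp [hE, h1]
  have hge : (1 : ℝ) ≤ ‖E n‖ := by
    rw [hEn, norm_prod]
    calc (1:ℝ) = ∏ _i : Fin n, (1:ℝ) := (Finset.prod_const_one).symm
      _ ≤ ∏ i, ‖z i‖ := Finset.prod_le_prod (fun i _ => zero_le_one) (fun i _ => hz i)
  linarith
end

section
/- Let z_1,...,z_n be complex numbers with |z_k| ≥ 1 for all k, and let 1 ≤ m ≤ n be an integer. Then max over ν = 1,...,2nm − m(m+1) + 1 of |∑_{k=1}^n z_k^ν| is at least √m. -/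
open Finset MvPolynomial

private lemma sum_neg_real {α : Type*} (s : Finset α) (f : α → ℂ)
    (h : ∀ a ∈ s, ∃ r : ℝ, 0 ≤ r ∧ f a = -(r : ℂ)) :
    ∃ u : ℝ, 0 ≤ u ∧ ∑ a ∈ s, f a = -(u : ℂ) := by
  classical
  induction s using Finset.induction with
  | empty => exact ⟨0, le_refl 0, by simp⟩
  | insert x s' hx ih =>
    obtain ⟨u, hu, hsum⟩ := ih (fun a ha => h a (Finset.mem_insert_of_mem ha))
    obtain ⟨r, hr, hfx⟩ := h x (Finset.mem_insert_self x s')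
    refine ⟨r + u, by linarith, ?_⟩
    rw [Finset.sum_insert hx, hsum, hfx]
    push_cast
    ring

private lemma newton_sign {σ : Type*} [Fintype σ] [DecidableEq σ] (w : σ → ℂ)
    (hQ1 : 1 ≤ Fintype.card σ)
    (hp : ∀ ν, 1 ≤ ν → ν ≤ Fintype.card σ →
      ∃ r : ℝ, 0 < r ∧ ∑ i, w i ^ ν = -(r : ℂ)) :
    ∃ r : ℝ, 0 < r ∧ ∑ i, w i ^ (Fintype.card σ + 1) = (r : ℂ) := by
  set Q := Fintype.card σ with hQdef
  let p : ℕ → ℂ := fun k => ∑ i, w i ^ k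
  let E : ℕ → ℂ := fun k => aeval w (esymm σ ℂ k)
  have hpow : ∀ j : ℕ, ((-1 : ℂ)) ^ j * (-1) ^ j = 1 := fun j => by
    rw [← pow_add]; exact Even.neg_one_pow ⟨j, rfl⟩
  have hp' : ∀ ν, 1 ≤ ν → ν ≤ Q → ∃ r : ℝ, 0 < r ∧ p ν = -(r : ℂ) := hp
  have hpsum : ∀ k, aeval w (psum σ ℂ k) = p k := by
    intro k
    simp [MvPolynomial.psum, p]
  have newton : ∀ k, 0 < k → p k = (-1) ^ (k + 1) * (k : ℂ) * E k -
      ∑ a ∈ (antidiagonal k).filter (fun a => a.1 ∈ Set.Ioo 0 k),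
        (-1) ^ a.1 * E a.1 * p a.2 := by
    intro k hk
    have h0 := congrArg (aeval w) (psum_eq_mul_esymm_sub_sum σ ℂ k hk)
    rw [map_sub, map_mul, map_mul, map_pow, map_neg, map_one, map_natCast, map_sum] at h0
    rw [hpsum] at h0
    convert h0 using 3 with a
    rw [map_mul, map_mul, map_pow, map_neg, map_one, hpsum]
  have key : ∀ k, 1 ≤ k → k ≤ Q → ∃ r : ℝ, 0 < r ∧ E k = (-1) ^ k * (r : ℝ) := by
    intro k
    induction k using Nat.strong_induction_on with
    | _ k ih =>
      intro hk1 hkQ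
      have hterm : ∀ a ∈ (antidiagonal k).filter (fun a => a.1 ∈ Set.Ioo 0 k),
          ∃ r : ℝ, 0 ≤ r ∧ (-1 : ℂ) ^ a.1 * E a.1 * p a.2 = -(r : ℂ) := by
        intro a ha
        rw [Finset.mem_filter, Finset.HasAntidiagonal.mem_antidiagonal] at ha
        obtain ⟨hsum, h1, h2⟩ := ha
        obtain ⟨r1, hr1, hE1⟩ := ih a.1 h2 h1 (by omega)
        obtain ⟨r2, hr2, hp2⟩ := hp' a.2 (by omega) (by omega)
        refine ⟨r1 * r2, by positivity, ?_⟩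
        rw [hE1, hp2]
        push_cast
        linear_combination (-(r1 * r2) : ℂ) * hpow a.1
      obtain ⟨u, hu, hsum⟩ := sum_neg_real _ _ hterm
      obtain ⟨r0, hr0, hp0⟩ := hp' k hk1 hkQ
      have hnk := newton k (by omega)
      rw [hsum, hp0] at hnk
      have hk0 : (k : ℂ) ≠ 0 := Nat.cast_ne_zero.mpr (by omega)
      set ε : ℂ := (-1) ^ k with hεdef
      have hε2 : ε * ε = 1 := hpow k
      have hX : (-ε) * ((k : ℂ) * E k) = -(((r0 : ℝ) : ℂ) + ((u : ℝ) : ℂ)) := by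
        have hps : ((-1 : ℂ)) ^ (k + 1) = -ε := by rw [pow_succ, ← hεdef]; ring
        rw [hps] at hnk
        linear_combination -hnk
      have hkE : (k : ℂ) * E k = ε * (((r0 : ℝ) : ℂ) + ((u : ℝ) : ℂ)) := by
        linear_combination (-ε) * hX + (-((k : ℂ) * E k)) * hε2
      refine ⟨(r0 + u) / k, by positivity, ?_⟩
      push_cast
      field_simp
      linear_combination hkE
  have hE0 : E (Q + 1) = 0 := by
    show aeval w (esymm σ ℂ (Q + 1)) = 0
    have h1 : esymm σ ℂ (Q + 1) = 0 := by
      rw [MvPolynomial.esymm]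
      rw [Finset.powersetCard_eq_empty.mpr (by simp [← hQdef])]
      simp
    rw [h1, map_zero]
  have hnewton := newton (Q + 1) (by omega)
  rw [hE0, mul_zero, zero_sub] at hnewton
  have hmem : ((Q, 1) : ℕ × ℕ) ∈ (antidiagonal (Q + 1)).filter
      (fun a => a.1 ∈ Set.Ioo 0 (Q + 1)) := by
    rw [Finset.mem_filter, Finset.HasAntidiagonal.mem_antidiagonal]
    exact ⟨rfl, by constructor <;> omega⟩
  rw [← Finset.add_sum_erase _ _ hmem] at hnewton
  obtain ⟨rQ, hrQ, hEQ⟩ := key Q hQ1 le_rfl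
  obtain ⟨r1, hr1, hp1⟩ := hp' 1 le_rfl hQ1
  obtain ⟨u, hu, hsum⟩ := sum_neg_real
      (((antidiagonal (Q + 1)).filter (fun a => a.1 ∈ Set.Ioo 0 (Q + 1))).erase (Q, 1))
      (fun a => (-1 : ℂ) ^ a.1 * E a.1 * p a.2)
      (fun a ha => by
        have ha' := Finset.mem_of_mem_erase ha
        rw [Finset.mem_filter, Finset.HasAntidiagonal.mem_antidiagonal] at ha'
        obtain ⟨hsum', h1, h2⟩ := ha'
        have ha1Q : a.1 ≤ Q := by omega
        have ha2Q : a.2 ≤ Q := by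
          rcases Nat.lt_or_ge a.2 (Q + 1) with h | h
          · omega
          · exfalso
            have : a.1 = 0 := by omega
            omega
        have ha2pos : 1 ≤ a.2 := by
          by_contra hc
          have : a.2 = 0 := by omega
          have : a.1 = Q + 1 := by omega
          omega
        obtain ⟨s1, hs1, hE1⟩ := key a.1 h1 ha1Q
        obtain ⟨s2, hs2, hp2⟩ := hp' a.2 ha2pos ha2Q
        refine ⟨s1 * s2, by positivity, ?_⟩
        show (-1 : ℂ) ^ a.1 * E a.1 * p a.2 = -(((s1 * s2 : ℝ)) : ℂ)
        rw [hE1, hp2]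
        push_cast
        linear_combination (-((s1 : ℂ) * (s2 : ℂ))) * hpow a.1)
  rw [hsum] at hnewton
  refine ⟨rQ * r1 + u, by positivity, ?_⟩
  show p (Q + 1) = ((rQ * r1 + u : ℝ) : ℂ)
  rw [hnewton, hEQ, hp1]
  push_cast
  linear_combination ((rQ * r1 : ℂ)) * hpow Q

open Finset MvPolynomial Complex

theorem cassels_type_lower (n m : ℕ) (hm : 1 ≤ m) (hmn : m ≤ n)
    (z : Fin n → ℂ) (hz : ∀ k, 1 ≤ ‖z k‖) :
    ∃ ν ∈ Finset.Icc 1 (2 * n * m - m * (m + 1) + 1),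
      Real.sqrt m ≤ ‖∑ k, z k ^ ν‖ := by
  classical
  by_cases hn1 : n = 1
  · subst hn1
    have hm1 : m = 1 := le_antisymm hmn hm
    subst hm1
    refine ⟨1, by simp, ?_⟩
    simp only [pow_one, Fin.sum_univ_one]
    simpa using hz 0
  have hn2 : 2 ≤ n := by omega
  set M := 2 * n * m - m * (m + 1) + 1 with hMdef
  by_contra hcon
  push_neg at hcon
  set C : Finset (Fin n) := Finset.univ.filter (fun k => (k : ℕ) < n - m) with hCdef
  have hCcard : C.card = n - m := by
    rw [Finset.card_bij (fun (k : Fin n) _ => (k : ℕ)) ?_ ?_ ?_]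
    · exact (Finset.card_range (n - m))
    · intro a ha
      rw [hCdef, Finset.mem_filter] at ha
      exact Finset.mem_range.mpr ha.2
    · intro a ha b hb hab
      exact Fin.val_injective hab
    · intro b hb
      have hbn : b < n := by
        have := Finset.mem_range.mp hb
        omega
      refine ⟨⟨b, hbn⟩, ?_, rfl⟩
      rw [hCdef, Finset.mem_filter]
      exact ⟨Finset.mem_univ _, Finset.mem_range.mp hb⟩
  have hCc : Cᶜ.card = m := by
    rw [Finset.card_compl, hCcard]
    simp only [Fintype.card_fin]
    omega
  set w : Fin n × Fin n → ℂ := fun a => z a.1 * (starRingEnd ℂ) (z a.2) with hwdef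
  set B1 : Finset (Fin n × Fin n) :=
    Finset.univ.filter (fun a => a.1 ∈ C ∧ a.2 ∈ C) with hB1def
  set S2 : Finset (Fin n × Fin n) :=
    Finset.univ.filter (fun a => ¬(a.1 ∈ C ∧ a.2 ∈ C)) with hS2def
  set D : Finset (Fin n × Fin n) := S2.filter (fun a => a.1 = a.2) with hDdef
  set P : Finset (Fin n × Fin n) := S2.filter (fun a => ¬ a.1 = a.2) with hPdef
  have hwpow : ∀ (ν : ℕ) (x y : Fin n),
      z x ^ ν * (starRingEnd ℂ) (z y ^ ν) = w (x, y) ^ ν := by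
    intro ν x y
    rw [hwdef]
    simp only [map_pow]
    rw [mul_pow]
  -- decomposition
  have hdecomp : ∀ ν : ℕ,
      (∑ k, z k ^ ν) * (starRingEnd ℂ) (∑ k, z k ^ ν) =
      (∑ a ∈ B1, w a ^ ν) + ((∑ a ∈ D, w a ^ ν) + (∑ a ∈ P, w a ^ ν)) := by
    intro ν
    have h1 : (∑ k, z k ^ ν) * (starRingEnd ℂ) (∑ k, z k ^ ν)
        = ∑ a ∈ (Finset.univ : Finset (Fin n × Fin n)), w a ^ ν := by
      rw [map_sum, Finset.sum_mul_sum, ← Finset.univ_product_univ, Finset.sum_product]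
      exact Finset.sum_congr rfl (fun x _ => Finset.sum_congr rfl (fun y _ => hwpow ν x y))
    rw [h1, ← Finset.sum_filter_add_sum_filter_not (Finset.univ : Finset (Fin n × Fin n))
      (fun a => a.1 ∈ C ∧ a.2 ∈ C) (fun a => w a ^ ν),
      ← Finset.sum_filter_add_sum_filter_not S2 (fun a => a.1 = a.2) (fun a => w a ^ ν)]
  -- B1 part
  have hB1eq : B1 = C ×ˢ C := by
    ext a
    rw [hB1def, Finset.mem_filter, Finset.mem_product]
    simp
  have hB1sum : ∀ ν : ℕ, ∑ a ∈ B1, w a ^ ν =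
      (∑ k ∈ C, z k ^ ν) * (starRingEnd ℂ) (∑ k ∈ C, z k ^ ν) := by
    intro ν
    rw [hB1eq, Finset.sum_product, map_sum, Finset.sum_mul_sum]
    exact Finset.sum_congr rfl (fun x _ => Finset.sum_congr rfl (fun y _ => (hwpow ν x y).symm))
  -- D part
  have hDsum : ∀ ν : ℕ, ∑ a ∈ D, w a ^ ν = ((∑ k ∈ Cᶜ, normSq (z k) ^ ν : ℝ) : ℂ) := by
    intro ν
    push_cast
    rw [Finset.sum_nbij' (i := fun (a : Fin n × Fin n) => a.1) (j := fun k => (k, k))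
      ?_ ?_ ?_ ?_ ?_]
    · intro a ha
      rw [hDdef, Finset.mem_filter, hS2def, Finset.mem_filter] at ha
      rw [Finset.mem_compl]
      have := ha.1.2
      have h2 := ha.2
      intro hmem
      exact this ⟨hmem, h2 ▸ hmem⟩
    · intro k hk
      rw [Finset.mem_compl] at hk
      rw [hDdef, Finset.mem_filter, hS2def, Finset.mem_filter]
      exact ⟨⟨Finset.mem_univ _, fun h => hk h.1⟩, rfl⟩
    · intro a ha
      rw [hDdef, Finset.mem_filter] at ha
      exact Prod.ext rfl ha.2
    · intro k hk
      rfl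
    · intro a ha
      rw [hDdef, Finset.mem_filter] at ha
      have h2 := ha.2
      rw [hwdef]
      simp only
      rw [← h2, Complex.mul_conj]
  -- P part : real
  have hPswap : ∀ a : Fin n × Fin n, a ∈ P → a.swap ∈ P := by
    intro a ha
    rw [hPdef, Finset.mem_filter, hS2def, Finset.mem_filter] at ha ⊢
    refine ⟨⟨Finset.mem_univ _, fun h => ha.1.2 ⟨h.2, h.1⟩⟩, fun h => ha.2 h.symm⟩
  have hPreal : ∀ ν : ℕ, (starRingEnd ℂ) (∑ a ∈ P, w a ^ ν) = ∑ a ∈ P, w a ^ ν := by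
    intro ν
    rw [map_sum]
    rw [Finset.sum_nbij' (i := fun (a : Fin n × Fin n) => a.swap)
      (j := fun (a : Fin n × Fin n) => a.swap) (fun a ha => hPswap a ha)
      (fun a ha => hPswap a ha) (fun a _ => Prod.swap_swap a) (fun a _ => Prod.swap_swap a)
      ?_]
    intro a ha
    rw [hwdef]
    simp only [Prod.fst_swap, Prod.snd_swap, map_pow, map_mul, Complex.conj_conj]
    ring
    -- negativity of the P-part for small power sums
  have hGneg : ∀ ν, 1 ≤ ν → ν ≤ M → ∃ r : ℝ, 0 < r ∧ ∑ a ∈ P, w a ^ ν = -(r : ℂ) := by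
    intro ν h1 h2
    have hlt := hcon ν (Finset.mem_Icc.mpr ⟨h1, h2⟩)
    have hd := hdecomp ν
    have hre0 : ((∑ k, z k ^ ν) * (starRingEnd ℂ) (∑ k, z k ^ ν)).re
        = normSq (∑ k, z k ^ ν) := by rw [Complex.mul_conj]; simp
    have hreB : (0:ℝ) ≤ (∑ a ∈ B1, w a ^ ν).re := by
      rw [hB1sum ν, Complex.mul_conj]
      simp [Complex.normSq_nonneg]
    have hreD : (m : ℝ) ≤ (∑ a ∈ D, w a ^ ν).re := by
      rw [hDsum ν, Complex.ofReal_re]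
      calc (m : ℝ) = (Cᶜ.card : ℝ) * 1 := by rw [hCc]; ring
        _ ≤ ∑ k ∈ Cᶜ, normSq (z k) ^ ν := by
            rw [← nsmul_eq_mul]
            apply Finset.card_nsmul_le_sum
            intro k _
            have h1' : (1:ℝ) ≤ normSq (z k) := by
              rw [Complex.normSq_eq_norm_sq]
              calc (1:ℝ) = 1 ^ 2 := by norm_num
                _ ≤ ‖z k‖ ^ 2 := by
                    apply pow_le_pow_left₀ zero_le_one
                    exact hz k
            calc (1:ℝ) = 1 ^ ν := (one_pow ν).symm
              _ ≤ normSq (z k) ^ ν := pow_le_pow_left₀ zero_le_one h1' ν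
    have hnormlt : normSq (∑ k, z k ^ ν) < m := by
      have h0 : ‖∑ k, z k ^ ν‖ ^ 2 < Real.sqrt m ^ 2 :=
        pow_lt_pow_left₀ hlt (norm_nonneg _) two_ne_zero
      rw [Real.sq_sqrt (by positivity : (0:ℝ) ≤ (m:ℝ))] at h0
      rw [Complex.normSq_eq_norm_sq]
      exact h0
    have himz : (∑ a ∈ P, w a ^ ν).im = 0 := by
      have h := congrArg Complex.im (hPreal ν)
      rw [Complex.conj_im] at h
      linarith
    have hrePneg : (∑ a ∈ P, w a ^ ν).re < 0 := by
      have h := congrArg Complex.re hd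
      rw [hre0] at h
      simp only [Complex.add_re] at h
      linarith
    refine ⟨-(∑ a ∈ P, w a ^ ν).re, by linarith, ?_⟩
    apply Complex.ext
    · simp
    · simp [himz]
  -- cardinalities
  have hDcard : D.card = m := by
    rw [← hCc]
    apply Finset.card_bij (fun (a : Fin n × Fin n) _ => a.1)
    · intro a ha
      rw [hDdef, Finset.mem_filter, hS2def, Finset.mem_filter] at ha
      rw [Finset.mem_compl]
      intro hmem
      exact ha.1.2 ⟨hmem, ha.2 ▸ hmem⟩
    · intro a ha b hb hab
      rw [hDdef, Finset.mem_filter] at ha hb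
      exact Prod.ext hab (by rw [← ha.2, ← hb.2]; exact hab)
    · intro k hk
      rw [Finset.mem_compl] at hk
      refine ⟨(k, k), ?_, rfl⟩
      rw [hDdef, Finset.mem_filter, hS2def, Finset.mem_filter]
      exact ⟨⟨Finset.mem_univ _, fun h => hk h.1⟩, rfl⟩
  have hB1card : B1.card = (n - m) * (n - m) := by
    rw [hB1eq, Finset.card_product, hCcard]
  have hsplit1 : B1.card + S2.card = n * n := by
    have h := Finset.card_filter_add_card_filter_not
      (s := (Finset.univ : Finset (Fin n × Fin n))) (p := fun a => a.1 ∈ C ∧ a.2 ∈ C)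
    rw [Finset.card_univ] at h
    have h2 : Fintype.card (Fin n × Fin n) = n * n := by simp
    rw [h2] at h
    exact h
  have hsplit2 : D.card + P.card = S2.card :=
    Finset.card_filter_add_card_filter_not (s := S2) (p := fun a => a.1 = a.2)
  set d := n - m with hddef
  have harith : d * d + (m + P.card) = n * n := by
    rw [hB1card] at hsplit1
    rw [hDcard] at hsplit2
    rw [← hsplit2] at hsplit1
    exact hsplit1
  obtain ⟨A, hA⟩ : ∃ A, m * m = A := ⟨_, rfl⟩
  obtain ⟨Bq, hBq⟩ : ∃ Bq, m * d = Bq := ⟨_, rfl⟩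
  obtain ⟨Dq, hDq⟩ : ∃ Dq, d * d = Dq := ⟨_, rfl⟩
  have hnd : n = m + d := by omega
  have e1 : n * n = A + 2 * Bq + Dq := by rw [hnd, ← hA, ← hBq, ← hDq]; ring
  have e2 : 2 * n * m = 2 * A + 2 * Bq := by rw [hnd, ← hA, ← hBq]; ring
  have e3 : m * (m + 1) = A + m := by rw [← hA]; ring
  have e4 : m ≤ A := by rw [← hA]; exact Nat.le_mul_of_pos_left m (by omega)
  have e56 : 2 * m ≤ A ∨ m ≤ Bq := by
    rcases Nat.eq_zero_or_pos d with h | h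
    · left
      rw [← hA]
      have h2 : 2 ≤ m := by omega
      calc 2 * m = m * 2 := by ring
        _ ≤ m * m := Nat.mul_le_mul (le_refl m) h2
    · right
      rw [← hBq]
      calc m = m * 1 := by ring
        _ ≤ m * d := Nat.mul_le_mul (le_refl m) h
  rw [hDq] at harith
  rw [e1] at harith
  have hPcard : P.card + 1 = M := by
    rw [hMdef, e2, e3]
    omega
  have hP1 : 1 ≤ P.card := by
    rcases e56 with h | h <;> omega
  -- apply the Newton sign lemma
  have hcard : Fintype.card ↥P = P.card := Fintype.card_coe P
  have hcoe : ∀ ν : ℕ, (∑ i : ↥P, w (i : Fin n × Fin n) ^ ν) = ∑ a ∈ P, w a ^ ν := by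
    intro ν
    exact Finset.sum_coe_sort P (fun a => w a ^ ν)
  obtain ⟨r, hr, hEq⟩ := newton_sign (σ := ↥P) (fun i => w (i : Fin n × Fin n))
    (by rw [hcard]; exact hP1)
    (by
      intro ν h1 h2
      rw [hcard] at h2
      obtain ⟨r, hr, hG⟩ := hGneg ν h1 (by omega)
      exact ⟨r, hr, by rw [hcoe]; exact hG⟩)
  rw [hcard, hcoe] at hEq
  obtain ⟨r', hr', hG⟩ := hGneg (P.card + 1) (by omega) (by omega)
  rw [hG] at hEq
  have hrr : ((r + r' : ℝ) : ℂ) = 0 := by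
    push_cast
    linear_combination -hEq
  rw [Complex.ofReal_eq_zero] at hrr
  linarith
end

section
/- If n is a prime power, then there exist integers b_1,...,b_n such that the differences b_i − b_j mod (n²−1) for i ≠ j form exactly all residues mod n²−1 that are not divisible by n+1. -/
lemma bose_count_pow_eq_one {F : Type*} [Field F] [Fintype F] [DecidableEq F]
    (g : Fˣ) (hg : ∀ u : Fˣ, u ∈ Subgroup.zpowers g)
    {d : ℕ} (hd : d ∣ Fintype.card Fˣ) (hd0 : 0 < d) :
    Fintype.card {u : Fˣ // u ^ d = 1} = d := by
  classical
  set m := Fintype.card Fˣ with hm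
  have hm0 : m ≠ 0 := Fintype.card_ne_zero
  have horder : orderOf g = m := (orderOf_eq_card_of_forall_mem_zpowers hg).trans (Nat.card_eq_fintype_card)
  have hdvd : (m / d) ∣ m := Nat.div_dvd_of_dvd hd
  have horder2 : orderOf (g ^ (m / d)) = d := by
    rw [orderOf_pow, horder, Nat.gcd_eq_right hdvd, Nat.div_div_self hd hm0]
  have hset : ∀ u : Fˣ, u ^ d = 1 ↔ u ∈ Subgroup.zpowers (g ^ (m / d)) := by
    intro u
    constructor
    · intro hu
      obtain ⟨j, hj⟩ := Subgroup.mem_zpowers_iff.mp (hg u)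
      have h1 : g ^ (j * (d : ℤ)) = 1 := by
        rw [zpow_mul, hj]
        exact_mod_cast hu
      have h2 : ((m : ℤ)) ∣ j * d := by
        rw [show (m:ℤ) = (orderOf g : ℤ) by rw [horder]]
        exact orderOf_dvd_iff_zpow_eq_one.mpr h1
      have h3 : ((m / d : ℕ) : ℤ) ∣ j := by
        have hmd : (m : ℤ) = ((m / d : ℕ) : ℤ) * (d : ℤ) := by
          exact_mod_cast (Nat.div_mul_cancel hd).symm
        rw [hmd] at h2
        exact (mul_dvd_mul_iff_right (by exact_mod_cast hd0.ne' : (d : ℤ) ≠ 0)).mp h2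
      obtain ⟨t, rfl⟩ := h3
      refine Subgroup.mem_zpowers_iff.mpr ⟨t, ?_⟩
      rw [← hj, ← zpow_natCast g (m / d), ← zpow_mul]
    · rintro hu
      obtain ⟨t, rfl⟩ := Subgroup.mem_zpowers_iff.mp hu
      have hyd : (g ^ (m / d)) ^ d = 1 := by
        rw [← pow_mul, Nat.div_mul_cancel hd, ← horder, pow_orderOf_eq_one]
      calc ((g ^ (m / d)) ^ t) ^ d = ((g ^ (m / d)) ^ (d : ℕ)) ^ t := by
            rw [← zpow_natCast ((g ^ (m/d)) ^ t), ← zpow_mul, mul_comm, zpow_mul, zpow_natCast]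
        _ = 1 := by rw [hyd, one_zpow]
  calc Fintype.card {u : Fˣ // u ^ d = 1}
      = Fintype.card (Subgroup.zpowers (g ^ (m / d))) :=
        Fintype.card_congr (Equiv.subtypeEquivRight hset)
    _ = d := by rw [Fintype.card_zpowers, horder2]

theorem bose_aux (n : ℕ) (hn : 2 ≤ n)
    (F : Type*) [Field F] [Fintype F] [DecidableEq F] (hF : Fintype.card F = n ^ 2)
    (f : F →+* F) (hf : ∀ x : F, f x = x ^ n) :
    ∃ b : Fin n → ℤ, ∀ r : ZMod (n ^ 2 - 1),
      (¬ (n + 1) ∣ r.val →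
        ∃! p : Fin n × Fin n, p.1 ≠ p.2 ∧
          ((b p.1 - b p.2 : ℤ) : ZMod (n ^ 2 - 1)) = r) ∧
      ((n + 1) ∣ r.val →
        ¬ ∃ p : Fin n × Fin n, p.1 ≠ p.2 ∧
          ((b p.1 - b p.2 : ℤ) : ZMod (n ^ 2 - 1)) = r) := by
  classical
  set m := n ^ 2 - 1 with hmdef
  have hnsq : n ^ 2 = n * n := sq n
  have hm : m = (n + 1) * (n - 1) := by
    obtain ⟨t, rfl⟩ : ∃ t, n = t + 2 := ⟨n - 2, by omega⟩
    have : (t + 2) ^ 2 = t * t + 4 * t + 4 := by ring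
    simp only [hmdef, this]
    have h2 : (t + 2 + 1) * (t + 2 - 1) = (t + 3) * (t + 1) := by norm_num
    have h3 : (t + 3) * (t + 1) = t * t + 4 * t + 3 := by ring
    omega
  have hm0 : 0 < m := by
    have h4 : 4 ≤ n * n := Nat.mul_le_mul hn hn
    omega
  have hcardu : Fintype.card Fˣ = m := by rw [Fintype.card_units, hF, hmdef]
  -- generator
  obtain ⟨g, hg⟩ := IsCyclic.exists_generator (α := Fˣ)
  have horder : orderOf g = m :=
    ((orderOf_eq_card_of_forall_mem_zpowers hg).trans Nat.card_eq_fintype_card).trans hcardu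
  -- counting roots of unity
  have hd1 : (n - 1) ∣ Fintype.card Fˣ := by
    exact ⟨n + 1, by rw [hcardu, hm, mul_comm]⟩
  have hcount : Fintype.card {u : Fˣ // u ^ (n - 1) = 1} = n - 1 :=
    bose_count_pow_eq_one g hg hd1 (by omega)
  -- theta is not in K
  have hθK : f (g : F) ≠ (g : F) := by
    intro hc
    rw [hf] at hc
    have h1 : (g : F) ^ (n - 1) * (g : F) = 1 * (g : F) := by
      rw [one_mul, ← pow_succ, show n - 1 + 1 = n by omega, hc]
    have h2 : (g : F) ^ (n - 1) = 1 := mul_right_cancel₀ (Units.ne_zero g) h1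
    have h3 : g ^ (n - 1) = 1 := Units.ext (by simpa using h2)
    have h4 := orderOf_dvd_of_pow_eq_one h3
    rw [horder] at h4
    have := Nat.le_of_dvd (by omega) h4
    nlinarith [hm]
  -- cardinality of K
  have hKcard : Fintype.card {x : F // x ^ n = x} = n := by
    have himg : (Finset.univ.filter fun x : F => x ^ n = x)
        = insert (0 : F) ((Finset.univ.filter fun u : Fˣ => u ^ (n - 1) = 1).image
            Units.val) := by
      ext x
      simp only [Finset.mem_filter, Finset.mem_univ, true_and, Finset.mem_insert,
        Finset.mem_image]
      constructor
      · intro hx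
        rcases eq_or_ne x 0 with h0 | h0
        · exact Or.inl h0
        · refine Or.inr ⟨Units.mk0 x h0, ?_, rfl⟩
          have h1 : x ^ (n - 1) * x = 1 * x := by
            rw [one_mul, ← pow_succ, show n - 1 + 1 = n by omega, hx]
          have hx1 : x ^ (n - 1) = 1 := mul_right_cancel₀ h0 h1
          exact Units.ext (by
            rw [Units.val_pow_eq_pow_val, Units.val_mk0, hx1, Units.val_one])
      · rintro (rfl | ⟨u, hu, rfl⟩)
        · exact zero_pow (by omega)
        · have h1 : (u : F) ^ (n - 1) = 1 := by
            have h2 := congrArg Units.val hu; simpa using h2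
          calc (u : F) ^ n = (u : F) ^ (n - 1) * (u : F) := by
                rw [← pow_succ, show n - 1 + 1 = n by omega]
            _ = (u : F) := by rw [h1, one_mul]
    rw [Fintype.card_subtype, himg, Finset.card_insert_of_notMem, 
      Finset.card_image_of_injective _ Units.val_injective, ← Fintype.card_subtype, hcount]
    · omega
    · intro hc
      obtain ⟨u, _, hu⟩ := Finset.mem_image.mp hc
      exact Units.ne_zero u hu
  -- the line
  let κ : Fin n ≃ {x : F // x ^ n = x} := (Fintype.equivFinOfCardEq hKcard).symm
  set a : Fin n → F := fun i => (κ i : F) with ha_def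
  have ha : ∀ i, (a i) ^ n = a i := fun i => (κ i).2
  have hainj : Function.Injective a := fun i j hij => κ.injective (Subtype.ext hij)
  have haK : ∀ i, f (a i) = a i := fun i => by rw [hf]; exact ha i
  set x : Fin n → F := fun i => (g : F) + a i with hx_def
  have hxne : ∀ i, x i ≠ 0 := by
    intro i hxi
    apply hθK
    have h1 : (g : F) = - a i := by
      have := hxi; simp only [hx_def] at this; linear_combination this
    rw [h1, map_neg, haK]
  have hxinj : Function.Injective x := by
    intro i j hij
    apply hainj
    simpa only [hx_def, add_right_inj] using hij
  set u : Fin n → Fˣ := fun i => Units.mk0 (x i) (hxne i) with hu_def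
  have huval : ∀ i, (u i : F) = x i := fun i => rfl
  -- discrete logs
  have hlog : ∀ i, ∃ j : ℤ, g ^ j = u i := fun i => Subgroup.mem_zpowers_iff.mp (hg (u i))
  choose b hb using hlog
  -- key lemma 1 : ratios of distinct line elements are not (n-1)-roots of unity
  have key1 : ∀ i j : Fin n, i ≠ j → ¬ (u i / u j) ^ (n - 1) = 1 := by
    intro i j hij h1
    set c : F := x i / x j with hc_def
    have hc0 : c ≠ 0 := div_ne_zero (hxne i) (hxne j)
    have hcpow : c ^ (n - 1) = 1 := by
      have h2 := congrArg Units.val h1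
      simpa [hc_def, div_pow, huval] using h2
    have hcK : f c = c := by
      rw [hf]
      calc c ^ n = c ^ (n - 1) * c := by rw [← pow_succ, show n - 1 + 1 = n by omega]
        _ = c := by rw [hcpow, one_mul]
    have hxc : x i = c * x j := by
      rw [hc_def, div_mul_cancel₀ _ (hxne j)]
    clear_value c
    by_cases hc1 : c = 1
    · rw [hc1, one_mul] at hxc
      exact hij (hxinj hxc)
    · apply hθK
      have h1c : (1 : F) - c ≠ 0 := sub_ne_zero.mpr (Ne.symm hc1)
      have hkey : (g : F) * (1 - c) = c * a j - a i := by
        have h2 := hxc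
        simp only [hx_def] at h2
        linear_combination h2
      have hθeq : (g : F) = (c * a j - a i) / (1 - c) := by
        rw [eq_div_iff h1c, hkey]
      rw [hθeq, map_div₀, map_sub, map_mul, hcK, haK, haK, map_sub, map_one, hcK]
  -- key lemma 2 : injectivity
  have key2 : ∀ i j i' j' : Fin n, i ≠ j → i' ≠ j' → u i / u j = u i' / u j' →
      i = i' ∧ j = j' := by
    intro i j i' j' hij hij' heq
    have hxx : x i * x j' = x i' * x j := by
      have h2 := congrArg Units.val heq
      simp only [Units.val_div_eq_div_val, huval] at h2
      rw [div_eq_div_iff (hxne j) (hxne j')] at h2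
      exact h2
    have hexp : (g : F) * (a i + a j' - a i' - a j) = a i' * a j - a i * a j' := by
      simp only [hx_def] at hxx
      linear_combination hxx
    by_cases hs : a i + a j' - a i' - a j = 0
    · have hprod : a i' * a j - a i * a j' = 0 := by rw [← hexp, hs, mul_zero]
      have hd : a i - a j - (a i' - a j') = 0 := by linear_combination hs
      have hdne : a i - a j ≠ 0 := sub_ne_zero.mpr (fun hc => hij (hainj hc))
      have hfact : (a i - a i') * (a i - a j) = 0 := by
        linear_combination hprod + a i * hd
      have hii' : i = i' := by
        rcases mul_eq_zero.mp hfact with h | h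
        · exact hainj (sub_eq_zero.mp h)
        · exact absurd h hdne
      have hjj' : j = j' := by
        apply hainj
        have : a i = a i' := by rw [hii']
        linear_combination this - hd
      exact ⟨hii', hjj'⟩
    · exfalso
      apply hθK
      have hθeq : (g : F) = (a i' * a j - a i * a j') / (a i + a j' - a i' - a j) := by
        rw [eq_div_iff hs, hexp]
      rw [hθeq, map_div₀, map_sub, map_mul, map_mul, map_sub, map_sub, map_add,
        haK, haK, haK, haK]
  -- counting
  have hcardS : Fintype.card {v : Fˣ // ¬ v ^ (n - 1) = 1} = n * n - n := by
    rw [Fintype.card_subtype_compl, hcount, hcardu]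
    omega
  have hcardP : Fintype.card {q : Fin n × Fin n // ¬ q.1 = q.2} = n * n - n := by
    have e : {q : Fin n × Fin n // q.1 = q.2} ≃ Fin n :=
      { toFun := fun q => q.1.1
        invFun := fun i => ⟨(i, i), rfl⟩
        left_inv := by rintro ⟨⟨i, j⟩, h⟩; cases h; rfl
        right_inv := fun i => rfl }
    rw [Fintype.card_subtype_compl, Fintype.card_prod, Fintype.card_fin,
      Fintype.card_congr e, Fintype.card_fin]
  set Ψ : {q : Fin n × Fin n // ¬ q.1 = q.2} → {v : Fˣ // ¬ v ^ (n - 1) = 1} :=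
    fun q => ⟨u q.1.1 / u q.1.2, key1 _ _ q.2⟩ with hΨdef
  have hΨinj : Function.Injective Ψ := by
    intro q q' hq
    obtain ⟨h1, h2⟩ := key2 _ _ _ _ q.2 q'.2 (congrArg Subtype.val hq)
    exact Subtype.ext (Prod.ext h1 h2)
  have hΨbij : Function.Bijective Ψ :=
    (Fintype.bijective_iff_injective_and_card Ψ).mpr ⟨hΨinj, by rw [hcardP, hcardS]⟩
  -- conclusion
  haveI : NeZero m := ⟨hm0.ne'⟩
  refine ⟨b, fun r => ?_⟩
  have hval : ((r.val : ℤ) : ZMod m) = r := by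
    rw [Int.cast_natCast, ZMod.natCast_val, ZMod.cast_id]
  set v : Fˣ := g ^ r.val with hv_def
  have hcond : ∀ i j : Fin n, (((b i - b j : ℤ) : ZMod m) = r) ↔ u i / u j = v := by
    intro i j
    have h1 : u i / u j = g ^ (b i - b j) := by
      rw [zpow_sub, hb, hb, div_eq_mul_inv]
    have h2 : v = g ^ ((r.val : ℤ)) := by rw [hv_def, zpow_natCast]
    rw [h1, h2, zpow_eq_zpow_iff_modEq, horder]
    conv_lhs => rw [← hval]
    exact ZMod.intCast_eq_intCast_iff _ _ _
  have hdivw : ∀ w : ℕ, ((n + 1) ∣ w ↔ (g ^ w) ^ (n - 1) = 1) := by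
    intro w
    rw [← pow_mul, ← orderOf_dvd_iff_pow_eq_one, horder, hm,
      Nat.mul_dvd_mul_iff_right (show 0 < n - 1 by omega)]
  have hdiv : (n + 1) ∣ r.val ↔ v ^ (n - 1) = 1 := by
    rw [hv_def]; exact hdivw r.val
  constructor
  · intro hr
    have hvS : ¬ v ^ (n - 1) = 1 := fun hc => hr (hdiv.mpr hc)
    obtain ⟨q, hq⟩ := hΨbij.2 ⟨v, hvS⟩
    refine ⟨q.1, ⟨q.2, (hcond _ _).mpr (congrArg Subtype.val hq)⟩, ?_⟩
    rintro q' ⟨hne', hcast'⟩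
    have h3 : Ψ ⟨q', hne'⟩ = ⟨v, hvS⟩ := Subtype.ext ((hcond _ _).mp hcast')
    exact congrArg Subtype.val (hΨinj (h3.trans hq.symm))
  · rintro hr ⟨q, hne, hcast⟩
    exact key1 _ _ hne (((hcond _ _).mp hcast).symm ▸ hdiv.mp hr)

theorem bose_theorem (n : ℕ) (h : IsPrimePow n) :
    ∃ b : Fin n → ℤ, ∀ r : ZMod (n ^ 2 - 1),
      (¬ (n + 1) ∣ r.val →
        ∃! p : Fin n × Fin n, p.1 ≠ p.2 ∧
          ((b p.1 - b p.2 : ℤ) : ZMod (n ^ 2 - 1)) = r) ∧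
      ((n + 1) ∣ r.val →
        ¬ ∃ p : Fin n × Fin n, p.1 ≠ p.2 ∧
          ((b p.1 - b p.2 : ℤ) : ZMod (n ^ 2 - 1)) = r) := by
  obtain ⟨p, k, hp, hk, rfl⟩ := h
  have hp' : p.Prime := Nat.prime_iff.mpr hp
  haveI : Fact p.Prime := ⟨hp'⟩
  have h2k : 2 * k ≠ 0 := by omega
  set F := GaloisField p (2 * k) with hFdef
  letI : Fintype F := Fintype.ofFinite F
  have hcard : Fintype.card F = (p ^ k) ^ 2 := by
    have h1 := GaloisField.card p (2 * k) h2k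
    rw [Nat.card_eq_fintype_card] at h1
    rw [h1, ← pow_mul, mul_comm]
  letI : DecidableEq F := Classical.decEq F
  have hn2 : 2 ≤ p ^ k := Nat.one_lt_pow hk.ne' hp'.two_le
  exact bose_aux (p ^ k) hn2 F hcard (iterateFrobenius F p k)
    (fun x => iterateFrobenius_def p k x)
end

section
/- Suppose b_1,...,b_n are integers such that the differences b_i − b_j mod (n²−1) for i ≠ j form exactly all residues mod n²−1 not divisible by n+1. Define z_k = e^{2πi b_k/(n²−1)}. Then for every ν with 1 ≤ ν ≤ n²−2, |∑_{k=1}^n z_k^ν| equals √n if (n−1) does not divide ν, and equals 1 if (n−1) divides ν. -/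
open Finset Complex

private lemma bose_zpow_eq_pow_val {N : ℕ} [NeZero N] {ζ : ℂ} (hζ0 : ζ ≠ 0) (hζ : ζ ^ N = 1)
    (m : ℤ) : ζ ^ m = ζ ^ (((m : ZMod N)).val) := by
  have h1 : (((m : ZMod N).val : ℤ) : ZMod N) = (m : ZMod N) := by
    push_cast
    simp [ZMod.natCast_val, ZMod.intCast_cast]
  have hd : (N : ℤ) ∣ m - ((m : ZMod N).val : ℤ) := by
    rwa [← ZMod.intCast_zmod_eq_zero_iff_dvd, Int.cast_sub, sub_eq_zero, eq_comm]
  obtain ⟨q, hq⟩ := hd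
  have hm : m = ((m : ZMod N).val : ℤ) + N * q := by linarith
  conv_lhs => rw [hm]
  rw [zpow_add₀ hζ0, zpow_natCast, zpow_mul, zpow_natCast, hζ, one_zpow, mul_one]

theorem bose_power_sums (n : ℕ) (b : Fin n → ℤ)
    (hdiff : ∀ r : ZMod (n ^ 2 - 1),
      (¬ (n + 1) ∣ r.val →
        ∃! p : Fin n × Fin n, p.1 ≠ p.2 ∧
          ((b p.1 - b p.2 : ℤ) : ZMod (n ^ 2 - 1)) = r) ∧
      ((n + 1) ∣ r.val →
        ¬ ∃ p : Fin n × Fin n, p.1 ≠ p.2 ∧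
          ((b p.1 - b p.2 : ℤ) : ZMod (n ^ 2 - 1)) = r))
    (z : Fin n → ℂ)
    (hz : ∀ k, z k = Complex.exp (2 * Real.pi * Complex.I * (b k) / (n ^ 2 - 1))) :
    ∀ ν : ℕ, 1 ≤ ν → ν ≤ n ^ 2 - 2 →
      ‖∑ k, z k ^ ν‖ = if (n - 1) ∣ ν then 1 else Real.sqrt n := by
  intro ν hν1 hν2
  -- n ≥ 2, else vacuous
  have hn2 : 2 ≤ n := by
    by_contra h
    push_neg at h
    interval_cases n <;> simp_all
  obtain ⟨m, rfl⟩ : ∃ m, n = m + 2 := ⟨n - 2, by omega⟩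
  set N : ℕ := (m + 2) ^ 2 - 1 with hNdef
  have hNval : N = m ^ 2 + 4 * m + 3 := by
    have : (m + 2) ^ 2 = m ^ 2 + 4 * m + 4 := by ring
    omega
  haveI : NeZero N := ⟨by omega⟩
  have hνN : ν ≤ N - 1 := by
    have : (m + 2) ^ 2 = m ^ 2 + 4 * m + 4 := by ring
    omega
  have hfac : N = (m + 1) * (m + 3) := by
    have : (m + 1) * (m + 3) = m ^ 2 + 4 * m + 3 := by ring
    omega
  set ζ : ℂ := Complex.exp (2 * Real.pi * Complex.I / N) with hζdef
  have hζ : IsPrimitiveRoot ζ N := Complex.isPrimitiveRoot_exp N (by omega)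
  have hζN : ζ ^ N = 1 := hζ.pow_eq_one
  have hζ0 : ζ ≠ 0 := Complex.exp_ne_zero _
  have hcast : ((m : ℂ) + 2) ^ 2 - 1 = (N : ℂ) := by
    have : (N : ℂ) = (m ^ 2 + 4 * m + 3 : ℕ) := by rw [hNval]
    rw [this]
    push_cast
    ring
  have hzk : ∀ k, z k = ζ ^ (b k : ℤ) := by
    intro k
    rw [hz k, hζdef, ← Complex.exp_int_mul]
    push_cast
    rw [hcast]
    congr 1
    have hN0 : (N : ℂ) ≠ 0 := by exact_mod_cast (NeZero.ne N)
    field_simp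
  -- power expression
  have hzpow : ∀ k, z k ^ ν = ζ ^ ((b k) * (ν : ℤ)) := by
    intro k
    rw [hzk k, ← zpow_natCast (ζ ^ (b k : ℤ)) ν, ← zpow_mul]
  set S : ℂ := ∑ k, z k ^ ν with hSdef
  set g : ZMod N → ℂ := fun r => (ζ ^ r.val) ^ ν with hgdef
  -- main computation
  have key : S * (starRingEnd ℂ) S = if (m + 1) ∣ ν then 1 else ((m : ℂ) + 2) := by
    have hconj : (starRingEnd ℂ) S = ∑ k, ζ ^ (-((b k) * (ν : ℤ))) := by
      rw [hSdef, map_sum]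
      refine Finset.sum_congr rfl fun k _ => ?_
      have hconjζ : (starRingEnd ℂ) ζ = ζ⁻¹ := by
        rw [hζdef, ← Complex.exp_conj, ← Complex.exp_neg]
        congr 1
        simp [map_div₀, Complex.conj_ofReal, map_ofNat]
        ring
      rw [hzpow k, map_zpow₀, hconjζ, inv_zpow, ← zpow_neg]
    have hterm : ∀ p : Fin (m + 2) × Fin (m + 2),
        z p.1 ^ ν * ζ ^ (-((b p.2) * (ν : ℤ))) = g (((b p.1 - b p.2 : ℤ) : ZMod N)) := by
      intro p
      rw [hzpow p.1, ← zpow_add₀ hζ0]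
      have : (b p.1) * (ν : ℤ) + -((b p.2) * (ν : ℤ)) = (b p.1 - b p.2) * ν := by ring
      rw [this, zpow_mul, bose_zpow_eq_pow_val hζ0 hζN (b p.1 - b p.2), zpow_natCast]
    have hSS : S * (starRingEnd ℂ) S =
        ∑ p ∈ (univ : Finset (Fin (m + 2))) ×ˢ univ,
          g (((b p.1 - b p.2 : ℤ) : ZMod N)) := by
      rw [hconj, hSdef, Finset.sum_mul_sum, ← Finset.sum_product']
      exact Finset.sum_congr rfl fun p _ => hterm p
    rw [hSS, ← Finset.diag_union_offDiag (univ : Finset (Fin (m + 2))),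
      Finset.sum_union (Finset.disjoint_diag_offDiag _)]
    have hdiag : ∑ p ∈ (univ : Finset (Fin (m + 2))).diag,
        g (((b p.1 - b p.2 : ℤ) : ZMod N)) = ((m : ℂ) + 2) := by
      rw [Finset.sum_diag]
      simp [hgdef]
    have hoff : ∑ p ∈ (univ : Finset (Fin (m + 2))).offDiag,
        g (((b p.1 - b p.2 : ℤ) : ZMod N)) =
        ∑ r ∈ univ.filter (fun r : ZMod N => ¬ (m + 2 + 1) ∣ r.val), g r := by
      have hmem : ∀ p ∈ (univ : Finset (Fin (m + 2))).offDiag,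
          ¬ (m + 2 + 1) ∣ (((b p.1 - b p.2 : ℤ) : ZMod N)).val := by
        intro p hp hdvd
        exact (hdiff _).2 hdvd ⟨p, (Finset.mem_offDiag.mp hp).2.2, rfl⟩
      refine Finset.sum_bij (fun p _ => ((b p.1 - b p.2 : ℤ) : ZMod N)) ?_ ?_ ?_ ?_
      · intro p hp
        simp only [Finset.mem_filter, Finset.mem_univ, true_and]
        exact hmem p hp
      · intro p hp q hq heq
        obtain ⟨u, _, huniq⟩ := (hdiff _).1 (hmem p hp)
        have h1 := huniq p ⟨(Finset.mem_offDiag.mp hp).2.2, rfl⟩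
        have h2 := huniq q ⟨(Finset.mem_offDiag.mp hq).2.2, heq.symm⟩
        rw [h1, h2]
      · intro r hr
        simp only [Finset.mem_filter, Finset.mem_univ, true_and] at hr
        obtain ⟨p, ⟨hne, heq⟩, -⟩ := (hdiff r).1 hr
        exact ⟨p, Finset.mem_offDiag.mpr ⟨Finset.mem_univ _, Finset.mem_univ _, hne⟩, heq⟩
      · intro p hp
        rfl
    rw [hdiag, hoff]
    -- sum over all residues is zero
    have hx1 : ζ ^ ν ≠ 1 := by
      rw [Ne, hζ.pow_eq_one_iff_dvd]
      intro hdvd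
      have := Nat.le_of_dvd (by omega) hdvd
      omega
    have huniv : ∑ r : ZMod N, g r = 0 := by
      have : ∑ r : ZMod N, g r = ∑ i ∈ Finset.range N, (ζ ^ ν) ^ i := by
        refine Finset.sum_nbij' (fun r => r.val) (fun i => (i : ZMod N)) ?_ ?_ ?_ ?_ ?_
        · intro r _
          exact Finset.mem_range.mpr (ZMod.val_lt r)
        · intro i _
          exact Finset.mem_univ _
        · intro r _
          simp [ZMod.natCast_val, ZMod.cast_id]
        · intro i hi
          exact ZMod.val_cast_of_lt (Finset.mem_range.mp hi)
        · intro r _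
          simp [hgdef, pow_right_comm]
      rw [this, geom_sum_eq hx1, ← pow_mul, mul_comm ν N, pow_mul, hζN, one_pow,
        sub_self, zero_div]
    have hsplit := Finset.sum_filter_add_sum_filter_not (univ : Finset (ZMod N))
      (fun r : ZMod N => (m + 2 + 1) ∣ r.val) g
    -- sum over divisible residues
    have hdivsum : ∑ r ∈ univ.filter (fun r : ZMod N => (m + 2 + 1) ∣ r.val), g r =
        if (m + 1) ∣ ν then ((m : ℂ) + 1) else 0 := by
      have hfac' : N = (m + 1) * (m + 2 + 1) := by rw [hfac]
      have hfac'' : N = (m + 2 + 1) * (m + 1) := by rw [hfac]; ring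
      have hb : ∑ s ∈ Finset.range (m + 1), ((ζ ^ (m + 2 + 1)) ^ ν) ^ s =
          ∑ r ∈ univ.filter (fun r : ZMod N => (m + 2 + 1) ∣ r.val), g r := by
        have hlt : ∀ s ∈ Finset.range (m + 1), (m + 2 + 1) * s < N := by
          intro s hs
          have hs' := Finset.mem_range.mp hs
          nlinarith [hNval]
        refine Finset.sum_nbij' (fun s => (((m + 2 + 1) * s : ℕ) : ZMod N))
          (fun r => r.val / (m + 2 + 1)) ?_ ?_ ?_ ?_ ?_
        · intro s hs
          simp only [Finset.mem_filter, Finset.mem_univ, true_and]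
          rw [ZMod.val_cast_of_lt (hlt s hs)]
          exact Dvd.intro s rfl
        · intro r hr
          simp only [Finset.mem_filter, Finset.mem_univ, true_and] at hr
          show r.val / (m + 2 + 1) ∈ Finset.range (m + 1)
          obtain ⟨t, ht⟩ := hr
          have hv := ZMod.val_lt r
          rw [ht, Nat.mul_div_cancel_left _ (by omega)]
          refine Finset.mem_range.mpr ?_
          by_contra hct
          push_neg at hct
          rw [ht] at hv
          nlinarith [hNval]
        · intro s hs
          show ((((m + 2 + 1) * s : ℕ) : ZMod N)).val / (m + 2 + 1) = s
          rw [ZMod.val_cast_of_lt (hlt s hs), Nat.mul_div_cancel_left _ (by omega)]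
        · intro r hr
          simp only [Finset.mem_filter, Finset.mem_univ, true_and] at hr
          show ((((m + 2 + 1) * (r.val / (m + 2 + 1)) : ℕ)) : ZMod N) = r
          rw [Nat.mul_div_cancel' hr]
          simp [ZMod.natCast_val, ZMod.cast_id]
        · intro s hs
          show ((ζ ^ (m + 2 + 1)) ^ ν) ^ s = g ((((m + 2 + 1) * s : ℕ) : ZMod N))
          simp only [hgdef]
          rw [ZMod.val_cast_of_lt (hlt s hs), pow_mul, ← pow_right_comm]
      rw [← hb]
      have hω : (ζ ^ (m + 2 + 1)) ^ (m + 1) = 1 := by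
        rw [← pow_mul, ← hfac'', hζN]
      by_cases hc : (m + 1) ∣ ν
      · obtain ⟨c, rfl⟩ := hc
        have h1 : (ζ ^ (m + 2 + 1)) ^ ((m + 1) * c) = 1 := by
          rw [pow_mul, hω, one_pow]
        rw [if_pos (dvd_mul_right (m + 1) c)]
        simp [h1]
      · have hprim : IsPrimitiveRoot (ζ ^ (m + 2 + 1)) (m + 1) :=
          hζ.pow (by omega) hfac''
        have hne1 : (ζ ^ (m + 2 + 1)) ^ ν ≠ 1 := by
          rw [Ne, hprim.pow_eq_one_iff_dvd]
          exact hc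
        rw [geom_sum_eq hne1, ← pow_mul, mul_comm ν (m + 1), pow_mul, hω, one_pow,
          sub_self, zero_div, if_neg hc]
    have : ∑ r ∈ univ.filter (fun r : ZMod N => ¬ (m + 2 + 1) ∣ r.val), g r =
        - ∑ r ∈ univ.filter (fun r : ZMod N => (m + 2 + 1) ∣ r.val), g r := by
      have := hsplit.trans huniv
      linear_combination this
    rw [this, hdivsum]
    by_cases hc : (m + 1) ∣ ν <;> simp [hc] <;> ring
  -- conclude
  have hnorm : Complex.normSq S = if (m + 1) ∣ ν then (1 : ℝ) else ((m : ℝ) + 2) := by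
    have h2 : (Complex.normSq S : ℂ) = if (m + 1) ∣ ν then 1 else ((m : ℂ) + 2) := by
      rw [← Complex.mul_conj]
      exact key
    by_cases hc : (m + 1) ∣ ν
    · rw [if_pos hc] at h2 ⊢
      exact_mod_cast h2
    · rw [if_neg hc] at h2 ⊢
      exact_mod_cast h2
  have hm21 : m + 2 - 1 = m + 1 := by omega
  rw [hm21, Complex.norm_def, hnorm]
  by_cases hc : (m + 1) ∣ ν
  · rw [if_pos hc, if_pos hc, Real.sqrt_one]
  · rw [if_neg hc, if_neg hc]
    norm_num
end

section
/- Let z_1,...,z_n be unimodular complex numbers and suppose that for every ν with 1 ≤ ν ≤ n²−n one has |∑_{k=1}^n z_k^ν|² ≤ n−1. Then for each such ν with n²−n+1 ∤ ν, letting s_ν = ∑_{k=1}^n z_k^ν, if the z_k come from a perfect difference set construction z_k = e^{2πi a_k/(n²−n+1)} then |s_ν|² = n−1 exactly, i.e. the maximum √(n−1) is attained at every ν in the range. -/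
theorem fabrykowski_equality (n : ℕ) (z : Fin n → ℂ)
    (hz : ∀ k, ‖z k‖ = 1)
    (hsmall : ∀ ν ∈ Finset.Icc 1 (n ^ 2 - n), ‖∑ k, z k ^ ν‖ ^ 2 ≤ (n : ℝ) - 1) :
    ∀ ν ∈ Finset.Icc 1 (n ^ 2 - n), ¬ (n ^ 2 - n + 1) ∣ ν →
      (∃ a : Fin n → ℤ,
        (∀ r : ZMod (n ^ 2 - n + 1), r ≠ 0 →
          ∃! p : Fin n × Fin n, p.1 ≠ p.2 ∧
            ((a p.1 - a p.2 : ℤ) : ZMod (n ^ 2 - n + 1)) = r) ∧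
        ∀ k, z k = Complex.exp (2 * Real.pi * Complex.I * (a k) / (n ^ 2 - n + 1))) →
      ‖∑ k, z k ^ ν‖ ^ 2 = (n : ℝ) - 1 := by
  intro ν hν hndvd hex
  obtain ⟨a, hds, hza⟩ := hex
  set m : ℕ := n ^ 2 - n + 1 with hm
  have hnle : n ≤ n ^ 2 := Nat.le_self_pow two_ne_zero n
  have hmC : ((m : ℕ) : ℂ) = (n : ℂ) ^ 2 - (n : ℂ) + 1 := by
    rw [hm]; push_cast [hnle]; ring
  have hmne0 : m ≠ 0 := by simp [hm]
  have hmne : (m : ℂ) ≠ 0 := Nat.cast_ne_zero.mpr hmne0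
  set ζ : ℂ := Complex.exp (2 * Real.pi * Complex.I * ν / m) with hζ
  have hζ0 : ζ ≠ 0 := Complex.exp_ne_zero _
  have hζm : ζ ^ m = 1 := by
    rw [hζ, ← Complex.exp_nat_mul]
    have harg : (m : ℂ) * (2 * Real.pi * Complex.I * ν / m) =
        (ν : ℕ) * (2 * Real.pi * Complex.I) := by
      field_simp
    rw [harg, Complex.exp_nat_mul, Complex.exp_two_pi_mul_I, one_pow]
  have h2pi : (2 : ℂ) * Real.pi * Complex.I ≠ 0 := by
    simp [Real.pi_ne_zero, Complex.I_ne_zero]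
  have hζ1 : ζ ≠ 1 := by
    intro h
    rw [hζ, Complex.exp_eq_one_iff] at h
    obtain ⟨k, hk⟩ := h
    apply hndvd
    rw [div_eq_iff hmne] at hk
    have h3 : (ν : ℂ) * (2 * Real.pi * Complex.I) =
        ((k : ℂ) * (m : ℂ)) * (2 * Real.pi * Complex.I) := by
      linear_combination hk
    have h5 : (ν : ℂ) = (k : ℂ) * (m : ℂ) := mul_right_cancel₀ h2pi h3
    have h6 : (ν : ℤ) = k * m := by exact_mod_cast h5
    have : (m : ℤ) ∣ (ν : ℤ) := ⟨k, by rw [h6]; ring⟩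
    exact_mod_cast this
  -- periodicity
  have hper : ∀ t : ℤ, ζ ^ t = ζ ^ ((t : ZMod m).val) := by
    intro t
    set v : ℕ := ((t : ZMod m)).val with hv
    have hd : (m : ℤ) ∣ t - (v : ℤ) := by
      apply (ZMod.intCast_zmod_eq_zero_iff_dvd _ m).mp
      push_cast [hv, ZMod.natCast_val, ZMod.cast_id]
      ring
    obtain ⟨q, hq⟩ := hd
    have ht : (v : ℤ) + (m : ℤ) * q = t := by linarith
    calc ζ ^ t = ζ ^ ((v : ℤ) + (m : ℤ) * q) := by rw [ht]
      _ = ζ ^ (v : ℤ) * ((ζ ^ (m : ℤ)) ^ q) := by rw [zpow_add₀ hζ0, zpow_mul]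
      _ = ζ ^ v := by
          rw [zpow_natCast ζ m, hζm, one_zpow, mul_one, zpow_natCast]
  set s : ℂ := ∑ k, z k ^ ν with hs
  have hsk : ∀ k, z k ^ ν = ζ ^ (a k) := by
    intro k
    rw [hza k, ← Complex.exp_nat_mul, hζ, ← Complex.exp_int_mul]
    congr 1
    rw [← hmC]
    field_simp
  have hconjζ : (starRingEnd ℂ) ζ = ζ⁻¹ := by
    rw [hζ, ← Complex.exp_conj, ← Complex.exp_neg]
    congr 1
    simp [map_div₀, map_mul, Complex.conj_I, Complex.conj_ofReal, map_natCast, map_ofNat]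
    ring
  have hconj : (starRingEnd ℂ) s = ∑ k, ζ ^ (-(a k)) := by
    rw [hs, map_sum]
    refine Finset.sum_congr rfl fun k _ => ?_
    rw [hsk k, map_zpow₀, hconjζ, inv_zpow, ← zpow_neg]
  have hprod : s * (starRingEnd ℂ) s =
      ∑ p : Fin n × Fin n, ζ ^ (a p.1 - a p.2) := by
    rw [hs, hconj, Finset.sum_mul_sum, Fintype.sum_prod_type]
    refine Finset.sum_congr rfl fun j _ => Finset.sum_congr rfl fun k _ => ?_
    rw [hsk j, ← zpow_add₀ hζ0, sub_eq_add_neg]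
  -- split diagonal / offdiagonal
  have hdiag : (Finset.univ.filter fun p : Fin n × Fin n => p.1 = p.2)
      = Finset.univ.diag := by
    ext p; simp [Finset.mem_diag]
  have hoff : (Finset.univ.filter fun p : Fin n × Fin n => ¬ p.1 = p.2)
      = Finset.univ.offDiag := by
    ext p; simp [Finset.mem_offDiag]
  have hsplit : ∑ p : Fin n × Fin n, ζ ^ (a p.1 - a p.2) =
      (∑ p ∈ Finset.univ.diag, ζ ^ (a p.1 - a p.2)) +
      (∑ p ∈ Finset.univ.offDiag, ζ ^ (a p.1 - a p.2)) := by
    rw [← hdiag, ← hoff, Finset.sum_filter_add_sum_filter_not]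
  have hdiag1 : ∀ p ∈ (Finset.univ.diag : Finset (Fin n × Fin n)),
      ζ ^ (a p.1 - a p.2) = 1 := by
    intro p hp
    rw [Finset.mem_diag] at hp
    rw [hp.2, sub_self, zpow_zero]
  have hdiagsum : (∑ p ∈ Finset.univ.diag, ζ ^ (a p.1 - a p.2)) = (n : ℂ) := by
    rw [Finset.sum_congr rfl hdiag1, Finset.sum_const, Finset.diag_card,
      Finset.card_univ, Fintype.card_fin, nsmul_eq_mul, mul_one]
  -- off diagonal
  have hpow2 : n ^ 2 = n * n := pow_two n
  have hcard1 : (Finset.univ.offDiag : Finset (Fin n × Fin n)).card = n ^ 2 - n := by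
    rw [Finset.offDiag_card, Finset.card_univ, Fintype.card_fin]
    omega
  have hcard2 : ((Finset.univ : Finset (ZMod m)).erase 0).card = n ^ 2 - n := by
    rw [Finset.card_erase_of_mem (Finset.mem_univ _), Finset.card_univ, ZMod.card, hm]
    omega
  set φ : Fin n × Fin n → ZMod m := fun p => ((a p.1 - a p.2 : ℤ) : ZMod m) with hφ
  have hsurj := Finset.surj_on_of_inj_on_of_card_le
    (s := (Finset.univ : Finset (ZMod m)).erase 0)
    (t := (Finset.univ.offDiag : Finset (Fin n × Fin n)))
    (fun r hr => (hds r (Finset.mem_erase.mp hr).1).choose)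
    (fun r hr => by
      have := (hds r (Finset.mem_erase.mp hr).1).choose_spec.1.1
      exact Finset.mem_offDiag.mpr ⟨Finset.mem_univ _, Finset.mem_univ _, this⟩)
    (fun r₁ r₂ h₁ h₂ heq => by
      have hs1 := (hds r₁ (Finset.mem_erase.mp h₁).1).choose_spec.1.2
      have hs2 := (hds r₂ (Finset.mem_erase.mp h₂).1).choose_spec.1.2
      rw [← hs1, ← hs2]
      exact congrArg (fun p : Fin n × Fin n => ((a p.1 - a p.2 : ℤ) : ZMod m)) heq)
    (by rw [hcard1, hcard2])
  have hφ0 : ∀ p ∈ (Finset.univ.offDiag : Finset (Fin n × Fin n)), φ p ≠ 0 := by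
    intro p hp
    obtain ⟨r, hr, hpr⟩ := hsurj p hp
    have hrne := (Finset.mem_erase.mp hr).1
    have hc := (hds r hrne).choose_spec.1.2
    rw [hpr]
    simp only [hφ]
    rw [hc]
    exact hrne
  have hoffsum : (∑ p ∈ Finset.univ.offDiag, ζ ^ (a p.1 - a p.2)) =
      ∑ r ∈ (Finset.univ : Finset (ZMod m)).erase 0, ζ ^ (r.val) := by
    refine Finset.sum_bij' (fun p _ => φ p)
      (fun r hr => (hds r (Finset.mem_erase.mp hr).1).choose) ?_ ?_ ?_ ?_ ?_
    · intro p hp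
      exact Finset.mem_erase.mpr ⟨hφ0 p hp, Finset.mem_univ _⟩
    · intro r hr
      have := (hds r (Finset.mem_erase.mp hr).1).choose_spec.1.1
      exact Finset.mem_offDiag.mpr ⟨Finset.mem_univ _, Finset.mem_univ _, this⟩
    · intro p hp
      have hne : p.1 ≠ p.2 := (Finset.mem_offDiag.mp hp).2.2
      exact ((hds (φ p) (hφ0 p hp)).choose_spec.2 p ⟨hne, rfl⟩).symm
    · intro r hr
      exact (hds r (Finset.mem_erase.mp hr).1).choose_spec.1.2
    · intro p _
      exact hper _
  have htotal : (∑ r : ZMod m, ζ ^ (r.val)) = 0 := by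
    rw [Finset.sum_nbij' (i := fun r : ZMod m => r.val)
      (j := fun i : ℕ => (i : ZMod m)) (t := Finset.range m)
      (g := fun i => ζ ^ i)
      (fun r _ => Finset.mem_range.mpr (ZMod.val_lt r))
      (fun i _ => Finset.mem_univ _)
      (fun r _ => ZMod.natCast_zmod_val r)
      (fun i hi => ZMod.val_cast_of_lt (Finset.mem_range.mp hi))
      (fun r _ => rfl)]
    rw [geom_sum_eq hζ1, hζm, sub_self, zero_div]
  have herase : ∑ r ∈ (Finset.univ : Finset (ZMod m)).erase 0, ζ ^ (r.val) = -1 := by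
    have h := Finset.sum_erase_add (Finset.univ : Finset (ZMod m))
      (fun r => ζ ^ (r.val)) (Finset.mem_univ 0)
    rw [htotal] at h
    simp only [ZMod.val_zero, pow_zero] at h
    linear_combination h
  have hfinal : s * (starRingEnd ℂ) s = (n : ℂ) - 1 := by
    rw [hprod, hsplit, hdiagsum, hoffsum, herase]
    ring
  have hnsq : (Complex.normSq s : ℂ) = ((n : ℝ) - 1 : ℝ) := by
    rw [← Complex.mul_conj, hfinal]
    push_cast
    ring
  have hnsq' : Complex.normSq s = (n : ℝ) - 1 := by exact_mod_cast hnsq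
  rw [Complex.sq_norm, hnsq']
end

section
/- Let n ≥ 2 and let z_k = e^{2πi a_k/(n²−n+1)}, k = 1,...,n, where {a_k} is a Singer perfect difference set mod n²−n+1. Then the power sums satisfy the two-valued property: |∑_{k=1}^n z_k^ν| ∈ {√(n−1), n} for every integer ν, with value n exactly when (n²−n+1) | ν. -/
theorem fabrykowski_two_valued (n : ℕ) (hn : 2 ≤ n) (a : Fin n → ℤ)
    (hdiff : ∀ r : ZMod (n ^ 2 - n + 1), r ≠ 0 →
      ∃! p : Fin n × Fin n, p.1 ≠ p.2 ∧
        ((a p.1 - a p.2 : ℤ) : ZMod (n ^ 2 - n + 1)) = r)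
    (z : Fin n → ℂ)
    (hz : ∀ k, z k = Complex.exp (2 * Real.pi * Complex.I * (a k) / (n ^ 2 - n + 1))) :
    ∀ ν : ℤ, ‖∑ k, z k ^ ν‖ =
      if ((n ^ 2 - n + 1 : ℕ) : ℤ) ∣ ν then (n : ℝ) else Real.sqrt ((n : ℝ) - 1) := by
  intro ν
  have hnn : n ^ 2 = n * n := sq n
  have h2n : 2 * n ≤ n * n := Nat.mul_le_mul_right n hn
  obtain ⟨m, hm_def⟩ : ∃ m : ℕ, n ^ 2 - n + 1 = m := ⟨_, rfl⟩
  rw [hm_def] at hdiff ⊢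
  have hm3 : 3 ≤ m := by omega
  have hmnn : m = n * n - n + 1 := by omega
  haveI : NeZero m := ⟨by omega⟩
  have hmC : (m : ℂ) ≠ 0 := Nat.cast_ne_zero.2 (by omega)
  have hmcast : ((m : ℕ) : ℂ) = (n : ℂ) ^ 2 - (n : ℂ) + 1 := by
    rw [← hm_def, Nat.cast_add, Nat.cast_sub (by omega : n ≤ n ^ 2)]
    push_cast
    ring
  have hz' : ∀ k, z k = Complex.exp (2 * Real.pi * Complex.I * (a k) / (m : ℂ)) := by
    intro k
    rw [hz k, hmcast]
  have h2pi : (2 * (Real.pi : ℂ) * Complex.I) ≠ 0 := by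
    simp [Real.pi_ne_zero, Complex.I_ne_zero]
  by_cases hdvd : ((m : ℕ) : ℤ) ∣ ν
  · -- divisible case: every z k ^ ν = 1
    obtain ⟨t, rfl⟩ := hdvd
    have h1 : ∀ k, z k ^ ((m : ℤ) * t) = 1 := by
      intro k
      rw [hz' k, ← Complex.exp_int_mul]
      have harg : (((m : ℤ) * t : ℤ) : ℂ) * (2 * Real.pi * Complex.I * (a k) / (m : ℂ))
          = ((a k * t : ℤ) : ℂ) * (2 * Real.pi * Complex.I) := by
        push_cast
        field_simp
      rw [harg, Complex.exp_int_mul_two_pi_mul_I]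
    rw [if_pos ⟨t, rfl⟩]
    simp only [h1]
    simp
  · -- non-divisible case
    rw [if_neg hdvd]
    set ζ : ℂ := Complex.exp (2 * Real.pi * Complex.I * ν / m) with hζ_def
    have hζ0 : ζ ≠ 0 := Complex.exp_ne_zero _
    have hζm : ζ ^ m = 1 := by
      rw [hζ_def, ← Complex.exp_nat_mul]
      have harg : ((m : ℕ) : ℂ) * (2 * Real.pi * Complex.I * ν / m)
          = ((ν : ℤ) : ℂ) * (2 * Real.pi * Complex.I) := by
        field_simp
      rw [harg, Complex.exp_int_mul_two_pi_mul_I]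
    have hζ1 : ζ ≠ 1 := by
      intro h1
      rw [hζ_def, Complex.exp_eq_one_iff] at h1
      obtain ⟨k, hk⟩ := h1
      have h3 : (2 * (Real.pi : ℂ) * Complex.I) * (ν : ℂ)
          = (2 * (Real.pi : ℂ) * Complex.I) * ((k : ℂ) * m) := by
        field_simp at hk
        linear_combination (2 * (Real.pi : ℂ) * Complex.I) * hk
      have h4 := mul_left_cancel₀ h2pi h3
      have h5 : ((ν : ℤ) : ℂ) = (((m : ℤ) * k : ℤ) : ℂ) := by
        push_cast
        linear_combination h4
      exact hdvd ⟨k, by exact_mod_cast h5⟩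
    -- power formula
    have hpow : ∀ t : ℤ, ζ ^ t = Complex.exp ((t : ℂ) * (2 * Real.pi * Complex.I * ν / m)) :=
      fun t => (Complex.exp_int_mul _ t).symm
    have hzk : ∀ k, z k ^ ν = ζ ^ (a k) := by
      intro k
      rw [hz' k, ← Complex.exp_int_mul, hpow]
      congr 1
      ring
    have hconj : ∀ t : ℤ, (starRingEnd ℂ) (ζ ^ t) = ζ ^ (-t) := by
      intro t
      rw [hpow, hpow, ← Complex.exp_conj]
      congr 1
      simp only [map_mul, map_div₀, Complex.conj_I, map_intCast, map_natCast, map_ofNat,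
        Complex.conj_ofReal]
      push_cast
      ring
    -- periodicity
    have hper : ∀ t : ℤ, ζ ^ t = ζ ^ (((t : ZMod m)).val : ℤ) := by
      intro t
      set v : ℕ := ((t : ZMod m)).val with hv_def
      have h0 : ((t - (v : ℤ) : ℤ) : ZMod m) = 0 := by
        push_cast
        rw [hv_def, ZMod.natCast_rightInverse]
        ring
      obtain ⟨c, hc⟩ := (ZMod.intCast_zmod_eq_zero_iff_dvd _ m).1 h0
      have ht : t = (v : ℤ) + (m : ℤ) * c := by linarith
      calc ζ ^ t = ζ ^ ((v : ℤ) + (m : ℤ) * c) := by rw [← ht]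
        _ = ζ ^ (v : ℤ) := by
            rw [zpow_add₀ hζ0, zpow_mul, zpow_natCast ζ m, hζm, one_zpow, mul_one]
    -- the sum and its conjugate
    set S : ℂ := ∑ k, z k ^ ν with hS_def
    classical
    set d : Fin n × Fin n → ZMod m := fun p => ((a p.1 - a p.2 : ℤ) : ZMod m) with hd_def
    set h : ZMod m → ℂ := fun r => ζ ^ ((r.val : ℕ) : ℤ) with hh_def
    have key : S * (starRingEnd ℂ) S = ∑ p : Fin n × Fin n, h (d p) := by
      rw [hS_def, map_sum, Finset.sum_mul_sum]
      rw [← Finset.sum_product']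
      apply Finset.sum_congr rfl
      rintro ⟨j, k⟩ _
      rw [hzk j, hzk k, hconj, ← zpow_add₀ hζ0, ← sub_eq_add_neg, hper]
    -- fiberwise
    have hfib := Finset.sum_fiberwise (Finset.univ : Finset (Fin n × Fin n)) d (fun p => h (d p))
    have hinner : ∀ r : ZMod m,
        ∑ p ∈ Finset.univ.filter (fun p => d p = r), h (d p)
          = ((Finset.univ.filter (fun p : Fin n × Fin n => d p = r)).card : ℕ) • h r := by
      intro r
      rw [← Finset.sum_const]
      apply Finset.sum_congr rfl
      intro p hp
      rw [(Finset.mem_filter.1 hp).2]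
    have hcard1 : ∀ r : ZMod m, r ≠ 0 →
        (Finset.univ.filter (fun p : Fin n × Fin n => d p = r)).card = 1 := by
      intro r hr
      obtain ⟨p₀, ⟨hp₀ne, hp₀d⟩, huniq⟩ := hdiff r hr
      rw [Finset.card_eq_one]
      refine ⟨p₀, ?_⟩
      ext q
      simp only [Finset.mem_filter, Finset.mem_univ, true_and, Finset.mem_singleton]
      constructor
      · intro hq
        have hqne : q.1 ≠ q.2 := by
          intro he
          apply hr
          rw [← hq, hd_def]
          simp [he]
        exact huniq q ⟨hqne, hq⟩
      · rintro rfl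
        exact hp₀d
    have hcardtot := Finset.card_eq_sum_card_fiberwise
      (f := d) (s := (Finset.univ : Finset (Fin n × Fin n))) (t := Finset.univ)
      (fun x _ => Finset.mem_univ _)
    have hcard0 : (Finset.univ.filter (fun p : Fin n × Fin n => d p = (0 : ZMod m))).card = n := by
      rw [← Finset.sum_erase_add _ _ (Finset.mem_univ (0 : ZMod m))] at hcardtot
      have herase : ∑ r ∈ Finset.univ.erase (0 : ZMod m),
          (Finset.univ.filter (fun p : Fin n × Fin n => d p = r)).card
          = ∑ r ∈ Finset.univ.erase (0 : ZMod m), 1 := by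
        apply Finset.sum_congr rfl
        intro r hr
        exact hcard1 r (Finset.ne_of_mem_erase hr)
      rw [herase, Finset.sum_const, smul_eq_mul, mul_one] at hcardtot
      have hc1 : (Finset.univ : Finset (Fin n × Fin n)).card = n * n := by simp
      have hc2 : (Finset.univ.erase (0 : ZMod m)).card = m - 1 := by
        rw [Finset.card_erase_of_mem (Finset.mem_univ _), Finset.card_univ, ZMod.card]
      rw [hc1, hc2] at hcardtot
      omega
    -- geometric sum
    have hG : ∑ r : ZMod m, h r = 0 := by
      have hbij : ∑ r : ZMod m, h r = ∑ i ∈ Finset.range m, ζ ^ i := by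
        apply Finset.sum_bij' (fun (r : ZMod m) _ => r.val)
          (fun (i : ℕ) _ => ((i : ℕ) : ZMod m))
        · intro r _
          exact Finset.mem_range.2 (ZMod.val_lt r)
        · intro i _
          exact Finset.mem_univ _
        · intro r _
          exact ZMod.natCast_rightInverse r
        · intro i hi
          exact ZMod.val_cast_of_lt (Finset.mem_range.1 hi)
        · intro r _
          simp only [hh_def, zpow_natCast]
      rw [hbij, geom_sum_eq hζ1, hζm, sub_self, zero_div]
    have hGsplit : ∑ r ∈ Finset.univ.erase (0 : ZMod m), h r = -1 := by
      have hs := Finset.sum_erase_add Finset.univ h (Finset.mem_univ (0 : ZMod m))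
      have h0 : h 0 = 1 := by
        simp only [hh_def, ZMod.val_zero]
        simp
      rw [h0, hG] at hs
      linear_combination hs
    have key2 : S * (starRingEnd ℂ) S = (n : ℂ) - 1 := by
      rw [key, ← hfib]
      calc ∑ r : ZMod m, ∑ p ∈ Finset.univ.filter (fun p => d p = r), h (d p)
          = ∑ r : ZMod m,
            ((Finset.univ.filter (fun p : Fin n × Fin n => d p = r)).card : ℕ) • h r := by
            exact Finset.sum_congr rfl fun r _ => hinner r
        _ = (∑ r ∈ Finset.univ.erase (0 : ZMod m),
              ((Finset.univ.filter (fun p : Fin n × Fin n => d p = r)).card : ℕ) • h r)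
            + ((Finset.univ.filter (fun p : Fin n × Fin n => d p = (0 : ZMod m))).card : ℕ)
              • h 0 := (Finset.sum_erase_add _ _ (Finset.mem_univ _)).symm
        _ = (∑ r ∈ Finset.univ.erase (0 : ZMod m), h r) + (n : ℕ) • h 0 := by
            rw [hcard0]
            congr 1
            apply Finset.sum_congr rfl
            intro r hr
            rw [hcard1 r (Finset.ne_of_mem_erase hr), one_smul]
        _ = (n : ℂ) - 1 := by
            rw [hGsplit]
            have h0 : h 0 = 1 := by
              simp only [hh_def, ZMod.val_zero]
              simp
            rw [h0]
            simp
            ring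
    have hnormSq : Complex.normSq S = (n : ℝ) - 1 := by
      have hc := Complex.mul_conj S
      rw [key2] at hc
      have heq : ((Complex.normSq S : ℝ) : ℂ) = (((n : ℝ) - 1 : ℝ) : ℂ) := by
        rw [← hc]
        push_cast
        ring
      exact_mod_cast heq
    rw [show ‖S‖ = Real.sqrt (Complex.normSq S) from by
      rw [Complex.norm_def], hnormSq]
end
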